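/- Let μ = μ_{R,B} be the self-affine measure for R = [[2,1],[0,2]] and B = {(0,0),(1,0)}. Then the zero set of the Fourier transform of μ is Z(μ̂) = {(ξ₁,ξ₂) ∈ ℝ² : ξ₁ ∈ ℤ∖{0}}, i.e. μ̂(ξ₁,ξ₂) = 0 if and only if ξ₁ is a nonzero integer. -/

import Mathlib

open MeasureTheory Filter Set Metric
open scoped ENNReal

noncomputable section

/-- The plane with the Euclidean metric. -/
abbrev Plane : Type := EuclideanSpace ℝ (Fin 2)

/-- The point `(a, b)` of the Euclidean plane. -/
def pt (a b : ℝ) : Plane := WithLp.toLp 2 ![a, b]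

/-- The self-affine measure `μ_{R,B}` for `R = [[2,1],[0,2]]`, `B = {(0,0),(1,0)}`:
the pushforward of Lebesgue measure on `[0,1]` under `x ↦ (x, 0)`. -/
def muRB : Measure Plane :=
  Measure.map (fun x : ℝ => pt x 0) (volume.restrict (Set.Icc (0:ℝ) 1))

instance : IsProbabilityMeasure (volume.restrict (Set.Icc (0:ℝ) 1)) :=
  ⟨by simp [Real.volume_Icc]⟩

lemma measurable_pt0 : Measurable (fun x : ℝ => pt x 0) := by
  unfold pt
  refine (PiLp.continuous_toLp 2 _).measurable.comp ?_
  refine measurable_pi_lambda _ (fun i => ?_)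
  fin_cases i
  · simp only [Matrix.cons_val_zero]
    exact measurable_id
  · simp only [Matrix.cons_val_one, Matrix.head_cons]
    exact measurable_const

instance : IsProbabilityMeasure muRB :=
  Measure.isProbabilityMeasure_map measurable_pt0.aemeasurable

/-- The Fourier transform `μ̂(ξ) = ∫ e^{-2πi⟨ξ,x⟩} dμ(x)` of a measure on the plane. -/
def fourierTransform (μ : Measure Plane) (ξ : Plane) : ℂ :=
  ∫ x, Complex.exp ((-(2 * Real.pi * (inner ℝ ξ x : ℝ)) : ℝ) * Complex.I) ∂μ

/-- The exponential function `e_λ(x) = e^{-2πi⟨λ,x⟩}`. -/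
def expFn (lam : Plane) : Plane → ℂ :=
  fun x => Complex.exp ((-(2 * Real.pi * (inner ℝ lam x : ℝ)) : ℝ) * Complex.I)

lemma expFn_memLp (μ : Measure Plane) [IsFiniteMeasure μ] (lam : Plane) :
    MemLp (expFn lam) 2 μ := by
  refine MemLp.of_bound ?_ 1 ?_
  · apply Continuous.aestronglyMeasurable
    unfold expFn
    have h1 : Continuous fun x : Plane => (inner ℝ lam x : ℝ) :=
      continuous_const.inner continuous_id
    exact Complex.continuous_exp.comp
      ((Complex.continuous_ofReal.comp ((continuous_const.mul h1).neg)).mul continuous_const)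
  · refine Eventually.of_forall fun x => ?_
    unfold expFn
    rw [Complex.norm_exp_ofReal_mul_I]

/-- The exponential `e_λ` as an element of `L²(μ)`. -/
def expLp (μ : Measure Plane) [IsFiniteMeasure μ] (lam : Plane) : Lp ℂ 2 μ :=
  (expFn_memLp μ lam).toLp _

/-- `Λ` is an orthogonal set of `μ`: the exponentials `{e_λ : λ ∈ Λ}` form an
orthonormal family in `L²(μ)`. -/
def IsOrthogonalSet (μ : Measure Plane) [IsFiniteMeasure μ] (Λ : Set Plane) : Prop :=
  Orthonormal ℂ (fun lam : Λ => expLp μ lam)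

/-- `Λ` is a spectrum of `μ`: the exponentials `{e_λ : λ ∈ Λ}` form an
orthonormal basis of `L²(μ)`. -/
def IsSpectrum (μ : Measure Plane) [IsFiniteMeasure μ] (Λ : Set Plane) : Prop :=
  Orthonormal ℂ (fun lam : Λ => expLp μ lam) ∧
    (Submodule.span ℂ (Set.range (fun lam : Λ => expLp μ lam))).topologicalClosure = ⊤

/-- The upper `r`-Beurling density
`D_r^+(Λ) = limsup_{h→∞} sup_{x} #(Λ ∩ B(x,h)) / h^r`. -/
def beurlingDensity (r : ℝ) (Λ : Set Plane) : ℝ≥0∞ :=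
  limsup (fun h : ℝ =>
    ⨆ x : Plane, ((Λ ∩ Metric.ball x h).encard : ℝ≥0∞) / ENNReal.ofReal (h ^ r)) atTop

/-- The upper `r`-density (centered at the origin)
`B_r^+(Λ) = limsup_{h→∞} #(Λ ∩ B(0,h)) / h^r`. -/
def upperDensity (r : ℝ) (Λ : Set Plane) : ℝ≥0∞ :=
  limsup (fun h : ℝ =>
    ((Λ ∩ Metric.ball (0 : Plane) h).encard : ℝ≥0∞) / ENNReal.ofReal (h ^ r)) atTop

/-- The Beurling dimension `dim_Be(Λ) = sup {r > 0 : D_r^+(Λ) = ∞}`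
(equal to `0` when the set is empty, by the convention `sSup ∅ = 0` in `ℝ`). -/
def beurlingDim (Λ : Set Plane) : ℝ :=
  sSup {r : ℝ | 0 < r ∧ beurlingDensity r Λ = ⊤}

/-- The Banach dimension `dim_Ba(Λ) = sup {r > 0 : B_r^+(Λ) = ∞}`. -/
def banachDim (Λ : Set Plane) : ℝ :=
  sSup {r : ℝ | 0 < r ∧ upperDensity r Λ = ⊤}

/-- The sign of an integer, as a real number. -/
def isgn (n : ℤ) : ℝ := (Int.sign n : ℝ)

end

open intervalIntegral

/-- The zero set of the Fourier transform of `μ_{R,B}` is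
`{(ξ₁,ξ₂) : ξ₁ ∈ ℤ \ {0}}`. -/
theorem zero_set_fourierTransform_muRB (ξ : Plane) :
    fourierTransform muRB ξ = 0 ↔ ∃ k : ℤ, k ≠ 0 ∧ ξ 0 = (k : ℝ) := by
  have hinner : ∀ x : ℝ, (inner ℝ ξ (pt x 0) : ℝ) = ξ 0 * x := by
    intro x
    simp [pt, PiLp.inner_apply, Fin.sum_univ_two, mul_comm]
  have hmeas : AEStronglyMeasurable
      (fun x : Plane => Complex.exp ((-(2 * Real.pi * (inner ℝ ξ x : ℝ)) : ℝ) * Complex.I))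
      muRB := by
    apply Continuous.aestronglyMeasurable
    have h1 : Continuous fun x : Plane => (inner ℝ ξ x : ℝ) :=
      continuous_const.inner continuous_id
    exact Complex.continuous_exp.comp
      ((Complex.continuous_ofReal.comp ((continuous_const.mul h1).neg)).mul continuous_const)
  have hmap : fourierTransform muRB ξ =
      ∫ x in Set.Icc (0:ℝ) 1,
        Complex.exp ((-(2 * Real.pi * (ξ 0 * x)) : ℝ) * Complex.I) := by
    rw [fourierTransform, muRB, MeasureTheory.integral_map measurable_pt0.aemeasurable hmeas]
    simp_rw [hinner]
  by_cases h0 : ξ 0 = 0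
  · have : fourierTransform muRB ξ = 1 := by
      rw [hmap]
      simp [h0]
    rw [this]
    constructor
    · intro h; exact absurd h one_ne_zero
    · rintro ⟨k, hk, hkeq⟩
      exact absurd (Int.cast_eq_zero.mp (hkeq.symm.trans h0)) hk
  · set c : ℂ := (-(2 * Real.pi * ξ 0) : ℝ) * Complex.I with hc
    have hcne : c ≠ 0 := by
      simp only [hc, ne_eq, mul_eq_zero, Complex.I_ne_zero, or_false,
        Complex.ofReal_eq_zero, neg_eq_zero]
      push_neg
      exact ⟨⟨two_ne_zero, Real.pi_ne_zero⟩, h0⟩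
    have hint : fourierTransform muRB ξ = (Complex.exp c - 1) / c := by
      rw [hmap, MeasureTheory.integral_Icc_eq_integral_Ioc,
        ← intervalIntegral.integral_of_le (by norm_num : (0:ℝ) ≤ 1)]
      have : ∀ x : ℝ, ((-(2 * Real.pi * (ξ 0 * x)) : ℝ) : ℂ) * Complex.I = c * x := by
        intro x
        simp only [hc]
        push_cast
        ring
      simp_rw [this]
      rw [integral_exp_mul_complex hcne]
      norm_num
    rw [hint, div_eq_zero_iff]
    simp only [hcne, or_false, sub_eq_zero]
    rw [Complex.exp_eq_one_iff]
    constructor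
    · rintro ⟨n, hn⟩
      refine ⟨-n, ?_, ?_⟩
      · intro hneg
        apply hcne
        have hn0 : n = 0 := by omega
        simpa [hn0] using hn
      · have hn' : ((-(2 * Real.pi * ξ 0) : ℝ) : ℂ) * Complex.I
            = ((n * (2 * Real.pi) : ℝ) : ℂ) * Complex.I := by
          rw [← hc, hn]; push_cast; ring
        have := mul_right_cancel₀ Complex.I_ne_zero hn'
        have h2 : (-(2 * Real.pi * ξ 0) : ℝ) = (n * (2 * Real.pi) : ℝ) :=
          Complex.ofReal_injective this
        have h3 : (2 * Real.pi) * ξ 0 = (2 * Real.pi) * (-(n:ℝ)) := by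
          linear_combination -h2
        have h4 := mul_left_cancel₀ (by positivity : (2 * Real.pi) ≠ 0) h3
        rw [h4]; push_cast; ring
    · rintro ⟨k, hk, hkeq⟩
      refine ⟨-k, ?_⟩
      rw [hc, hkeq]
      push_cast
      ring
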